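/- The Arnold class of families is closed under composition: if (f_a)_a and (g_a)_a are in C^{d,r}_A(𝕀^k, M, M) (i.e. all mixed partials ∂_a^i∂_z^j exist continuously for i ≤ d, i+j ≤ r), then the composed family (f_a ∘ g_a)_a also lies in C^{d,r}_A(𝕀^k, M, M). -/

import Mathlib

open MvPolynomial

noncomputable section StmtNine

abbrev StmtNine.σA : Type := Bool × ℕ × ℕ
open StmtNine

def StmtNine.vA : σA → MvPolynomial σA ℤ
  | (true, p, q) => X (true, p+1, q) + X (true, p, q+1) * X (false, 1, 0)
  | (false, p, q) => X (false, p+1, q)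

def StmtNine.vZ : σA → MvPolynomial σA ℤ
  | (true, p, q) => X (true, p, q+1) * X (false, 0, 1)
  | (false, p, q) => X (false, p, q+1)

def StmtNine.dA : Derivation ℤ (MvPolynomial σA ℤ) (MvPolynomial σA ℤ) := mkDerivation ℤ vA
def StmtNine.dZ : Derivation ℤ (MvPolynomial σA ℤ) (MvPolynomial σA ℤ) := mkDerivation ℤ vZ

lemma StmtNine.leib (D : Derivation ℤ (MvPolynomial σA ℤ) (MvPolynomial σA ℤ))
    (x y : MvPolynomial σA ℤ) : D (x * y) = x * D y + y * D x := by
  rw [Derivation.leibniz, smul_eq_mul, smul_eq_mul]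

lemma StmtNine.dA_X (v : σA) : dA (X v) = vA v := by unfold dA; exact mkDerivation_X ℤ vA v
lemma StmtNine.dZ_X (v : σA) : dZ (X v) = vZ v := by unfold dZ; exact mkDerivation_X ℤ vZ v

lemma StmtNine.key (v : σA) : dA (vZ v) = dZ (vA v) := by
  obtain ⟨b, p, q⟩ := v
  cases b <;>
    simp only [vA, vZ, dA, dZ, leib, map_add, mkDerivation_X] <;> ring

lemma StmtNine.comm (P : MvPolynomial σA ℤ) : dA (dZ P) = dZ (dA P) := by
  induction P using MvPolynomial.induction_on with
  | C a => simp
  | add p q hp hq => simp [hp, hq]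
  | mul_X p v hp =>
    rw [leib, leib, map_add, map_add, leib, leib, leib, leib, hp,
      dZ_X, dA_X, key]
    ring

def StmtNine.ok (i j : ℕ) : Set σA := {v | v.2.1 ≤ i ∧ v.2.1 + v.2.2 ≤ i + j}

def StmtNine.Good (i j : ℕ) : Subalgebra ℤ (MvPolynomial σA ℤ) :=
  Algebra.adjoin ℤ (X '' ok i j)

lemma StmtNine.good_mono {i j i' j' : ℕ} (hi : i ≤ i') (hj : i + j ≤ i' + j') :
    Good i j ≤ Good i' j' := by
  apply Algebra.adjoin_mono
  apply Set.image_mono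
  intro v hv
  exact ⟨hv.1.trans hi, hv.2.trans hj⟩

lemma StmtNine.X_mem_good {i j : ℕ} {v : σA} (h : v ∈ ok i j) : X v ∈ Good i j :=
  Algebra.subset_adjoin ⟨v, h, rfl⟩

lemma StmtNine.X_mem_good' {i j : ℕ} (b : Bool) (p q : ℕ) (h1 : p ≤ i) (h2 : p + q ≤ i + j) :
    X ((b, p, q) : σA) ∈ Good i j :=
  X_mem_good ⟨h1, h2⟩

lemma StmtNine.dA_good {i j : ℕ} {P : MvPolynomial σA ℤ} (h : P ∈ Good i j) :
    dA P ∈ Good (i+1) j := by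
  have main : P ∈ Good (i+1) j ∧ dA P ∈ Good (i+1) j := by
    induction h using Algebra.adjoin_induction with
    | mem x hx =>
      obtain ⟨v, hv, rfl⟩ := hx
      obtain ⟨b, p, q⟩ := v
      refine ⟨X_mem_good ⟨hv.1.trans (Nat.le_succ i), hv.2.trans (by omega)⟩, ?_⟩
      rw [dA_X]
      obtain ⟨h1, h2⟩ := hv
      simp only [ok, Set.mem_setOf_eq] at h1 h2
      cases b with
      | true =>
        exact add_mem (X_mem_good' _ _ _ (by omega) (by omega))
          (mul_mem (X_mem_good' _ _ _ (by omega) (by omega)) (X_mem_good' _ _ _ (by omega) (by omega)))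
      | false => exact X_mem_good' _ _ _ (by omega) (by omega)
    | algebraMap r => exact ⟨algebraMap_mem _ r, by simp [dA]⟩
    | add x y hx hy ihx ihy =>
      exact ⟨add_mem ihx.1 ihy.1, by rw [map_add]; exact add_mem ihx.2 ihy.2⟩
    | mul x y hx hy ihx ihy =>
      exact ⟨mul_mem ihx.1 ihy.1, by
        rw [leib]; exact add_mem (mul_mem ihx.1 ihy.2) (mul_mem ihy.1 ihx.2)⟩
  exact main.2

lemma StmtNine.dZ_good {i j : ℕ} {P : MvPolynomial σA ℤ} (h : P ∈ Good i j) :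
    dZ P ∈ Good i (j+1) := by
  have main : P ∈ Good i (j+1) ∧ dZ P ∈ Good i (j+1) := by
    induction h using Algebra.adjoin_induction with
    | mem x hx =>
      obtain ⟨v, hv, rfl⟩ := hx
      obtain ⟨b, p, q⟩ := v
      obtain ⟨h1, h2⟩ := hv
      simp only [ok, Set.mem_setOf_eq] at h1 h2
      refine ⟨X_mem_good' _ _ _ (by omega) (by omega), ?_⟩
      rw [dZ_X]
      cases b with
      | true =>
        exact mul_mem (X_mem_good' _ _ _ (by omega) (by omega)) (X_mem_good' _ _ _ (by omega) (by omega))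
      | false => exact X_mem_good' _ _ _ (by omega) (by omega)
    | algebraMap r => exact ⟨algebraMap_mem _ r, by simp [dZ]⟩
    | add x y hx hy ihx ihy =>
      exact ⟨add_mem ihx.1 ihy.1, by rw [map_add]; exact add_mem ihx.2 ihy.2⟩
    | mul x y hx hy ihx ihy =>
      exact ⟨mul_mem ihx.1 ihy.1, by
        rw [leib]; exact add_mem (mul_mem ihx.1 ihy.2) (mul_mem ihy.1 ihx.2)⟩
  exact main.2

end StmtNine

open Asymptotics Filter Metric Topology

lemma StmtNine.hasFDerivAt_of_partials (F Fa Fz : ℝ → ℝ → ℝ) (a₀ z₀ : ℝ)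
    (hA : ∀ a z, HasDerivAt (fun a' => F a' z) (Fa a z) a)
    (hZ0 : HasDerivAt (fun z' => F a₀ z') (Fz a₀ z₀) z₀)
    (hFaC : Continuous fun p : ℝ × ℝ => Fa p.1 p.2) :
    HasFDerivAt (fun p : ℝ × ℝ => F p.1 p.2)
      ((Fa a₀ z₀) • (ContinuousLinearMap.fst ℝ ℝ ℝ) +
       (Fz a₀ z₀) • (ContinuousLinearMap.snd ℝ ℝ ℝ)) (a₀, z₀) := by
  rw [hasFDerivAt_iff_isLittleO_nhds_zero]
  have h2 : (fun h : ℝ × ℝ => F a₀ (z₀ + h.2) - F a₀ z₀ - Fz a₀ z₀ * h.2)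
      =o[𝓝 0] fun h : ℝ × ℝ => h := by
    have hz := hZ0.hasFDerivAt
    rw [hasFDerivAt_iff_isLittleO_nhds_zero] at hz
    have hz' : (fun k : ℝ => F a₀ (z₀ + k) - F a₀ z₀ - Fz a₀ z₀ * k)
        =o[𝓝 0] fun k : ℝ => k := by
      simpa [smul_eq_mul, mul_comm] using hz
    have hcomp := hz'.comp_tendsto
      (continuous_snd.tendsto (0 : ℝ × ℝ) : Tendsto (fun h : ℝ × ℝ => h.2) (𝓝 0) (𝓝 0))
    exact hcomp.trans_isBigO (isBigO_of_le _ fun h => by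
      simpa using norm_snd_le h)
  have h1 : (fun h : ℝ × ℝ => F (a₀ + h.1) (z₀ + h.2) - F a₀ (z₀ + h.2) - Fa a₀ z₀ * h.1)
      =o[𝓝 0] fun h : ℝ × ℝ => h := by
    rw [isLittleO_iff]
    intro c hc
    have hcont : Tendsto (fun q : ℝ × ℝ => Fa q.1 q.2) (𝓝 (a₀, z₀)) (𝓝 (Fa a₀ z₀)) :=
      hFaC.continuousAt
    have hev : ∀ᶠ q : ℝ × ℝ in 𝓝 (a₀, z₀), dist (Fa q.1 q.2) (Fa a₀ z₀) ≤ c :=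
      hcont (Metric.closedBall_mem_nhds _ hc)
    rw [Metric.eventually_nhds_iff] at hev
    obtain ⟨δ, hδ, hball⟩ := hev
    have : ∀ᶠ h : ℝ × ℝ in 𝓝 0, ‖h‖ < δ := by
      have := Metric.ball_mem_nhds (0 : ℝ × ℝ) hδ
      filter_upwards [this] with h hh
      simpa [dist_eq_norm] using hh
    filter_upwards [this] with h hh
    set a := a₀ + h.1
    set z := z₀ + h.2
    have h1n : |h.1| < δ := lt_of_le_of_lt (by simpa using norm_fst_le h) hh
    have h2n : |h.2| < δ := lt_of_le_of_lt (by simpa using norm_snd_le h) hh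
    have key : ‖(F a z - Fa a₀ z₀ * a) - (F a₀ z - Fa a₀ z₀ * a₀)‖ ≤ c * ‖a - a₀‖ := by
      apply Convex.norm_image_sub_le_of_norm_hasDerivWithin_le
        (f := fun t => F t z - Fa a₀ z₀ * t) (f' := fun t => Fa t z - Fa a₀ z₀)
        (s := Metric.ball a₀ δ)
      · intro t ht
        exact ((hA t z).sub (by simpa using (hasDerivAt_id t).const_mul (Fa a₀ z₀))).hasDerivWithinAt
      · intro t ht
        have : dist (t, z) (a₀, z₀) < δ := by
          rw [Prod.dist_eq]
          simp only [sup_lt_iff]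
          constructor
          · exact ht
          · simpa [Real.dist_eq, z] using h2n
        simpa [Real.dist_eq] using hball this
      · exact convex_ball _ _
      · simpa using hδ
      · simpa [Real.dist_eq, a] using h1n
    have : ‖F a z - F a₀ z - Fa a₀ z₀ * h.1‖ ≤ c * ‖h.1‖ := by
      have e : F a z - Fa a₀ z₀ * a - (F a₀ z - Fa a₀ z₀ * a₀)
          = F a z - F a₀ z - Fa a₀ z₀ * h.1 := by simp [a]; ring
      have e2 : a - a₀ = h.1 := by simp [a]
      rw [e, e2] at key
      exact key
    calc ‖F a z - F a₀ z - Fa a₀ z₀ * h.1‖ ≤ c * ‖h.1‖ := this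
      _ ≤ c * ‖h‖ := by
          apply mul_le_mul_of_nonneg_left (norm_fst_le h) hc.le
  have := h1.add h2
  apply this.congr' _ (by rfl)
  filter_upwards with h
  simp [ContinuousLinearMap.add_apply, ContinuousLinearMap.smul_apply]
  ring


lemma StmtNine.hasDerivAt_comp₂ (F Fa Fz : ℝ → ℝ → ℝ) (u : ℝ → ℝ) (u' t₀ : ℝ)
    (hA : ∀ a z, HasDerivAt (fun a' => F a' z) (Fa a z) a)
    (hZ : ∀ a z, HasDerivAt (fun z' => F a z') (Fz a z) z)
    (hFaC : Continuous fun p : ℝ × ℝ => Fa p.1 p.2)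
    (hu : HasDerivAt u u' t₀) :
    HasDerivAt (fun t => F t (u t)) (Fa t₀ (u t₀) + Fz t₀ (u t₀) * u') t₀ := by
  have hF := hasFDerivAt_of_partials F Fa Fz t₀ (u t₀) hA (hZ t₀ (u t₀)) hFaC
  have hc : HasDerivAt (fun t => (t, u t)) ((1 : ℝ), u') t₀ :=
    (hasDerivAt_id t₀).prodMk hu
  have := hF.comp_hasDerivAt t₀ hc
  simpa [ContinuousLinearMap.add_apply, ContinuousLinearMap.smul_apply, mul_comm, Function.comp_def] using this

noncomputable def StmtNine.evalP (Df Dg : ℕ → ℕ → ℝ → ℝ → ℝ) (P : MvPolynomial σA ℤ)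
    (a z : ℝ) : ℝ :=
  aeval (fun v : σA => if v.1 then Df v.2.1 v.2.2 a (Dg 0 0 a z) else Dg v.2.1 v.2.2 a z) P

section Eval

variable (Df Dg : ℕ → ℕ → ℝ → ℝ → ℝ)

lemma StmtNine.evalP_add (x y : MvPolynomial σA ℤ) (a z : ℝ) :
    evalP Df Dg (x + y) a z = evalP Df Dg x a z + evalP Df Dg y a z := by
  simp [evalP]

lemma StmtNine.evalP_mul (x y : MvPolynomial σA ℤ) (a z : ℝ) :
    evalP Df Dg (x * y) a z = evalP Df Dg x a z * evalP Df Dg y a z := by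
  simp [evalP]

lemma StmtNine.evalP_algebraMap (n : ℤ) (a z : ℝ) :
    evalP Df Dg (algebraMap ℤ (MvPolynomial σA ℤ) n) a z = (n : ℝ) := by
  simp [evalP]

lemma StmtNine.evalP_zero (a z : ℝ) : evalP Df Dg 0 a z = 0 := by simp [evalP]

lemma StmtNine.evalP_X_true (p q : ℕ) (a z : ℝ) :
    evalP Df Dg (X ((true, p, q) : σA)) a z = Df p q a (Dg 0 0 a z) := by
  simp [evalP]

lemma StmtNine.evalP_X_false (p q : ℕ) (a z : ℝ) :
    evalP Df Dg (X ((false, p, q) : σA)) a z = Dg p q a z := by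
  simp [evalP]

variable {d r : ℕ}
  (hfC : ∀ i j, (i ≤ d ∧ i + j ≤ r) → Continuous fun p : ℝ × ℝ => Df i j p.1 p.2)
  (hgC : ∀ i j, (i ≤ d ∧ i + j ≤ r) → Continuous fun p : ℝ × ℝ => Dg i j p.1 p.2)
  (hfA : ∀ i j, (i + 1 ≤ d ∧ i + 1 + j ≤ r) → ∀ a z,
    HasDerivAt (fun a' => Df i j a' z) (Df (i + 1) j a z) a)
  (hgA : ∀ i j, (i + 1 ≤ d ∧ i + 1 + j ≤ r) → ∀ a z,
    HasDerivAt (fun a' => Dg i j a' z) (Dg (i + 1) j a z) a)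
  (hfZ : ∀ i j, (i ≤ d ∧ i + (j + 1) ≤ r) → ∀ a z,
    HasDerivAt (fun z' => Df i j a z') (Df i (j + 1) a z) z)
  (hgZ : ∀ i j, (i ≤ d ∧ i + (j + 1) ≤ r) → ∀ a z,
    HasDerivAt (fun z' => Dg i j a z') (Dg i (j + 1) a z) z)

include hfC hgC in
lemma StmtNine.cont_evalP {i j : ℕ} (hi : i ≤ d) (hj : i + j ≤ r)
    {P : MvPolynomial σA ℤ} (hP : P ∈ Good i j) :
    Continuous fun p : ℝ × ℝ => evalP Df Dg P p.1 p.2 := by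
  induction hP using Algebra.adjoin_induction with
  | mem x hx =>
    obtain ⟨⟨b, p, q⟩, ⟨h1, h2⟩, rfl⟩ := hx
    simp only [ok, Set.mem_setOf_eq] at h1 h2
    cases b with
    | true =>
      simp only [evalP_X_true]
      exact (hfC p q ⟨by omega, by omega⟩).comp
        (continuous_fst.prodMk ((hgC 0 0 ⟨by omega, by omega⟩).comp
          (continuous_fst.prodMk continuous_snd)))
    | false =>
      simp only [evalP_X_false]
      exact hgC p q ⟨by omega, by omega⟩
  | algebraMap n => simp only [evalP_algebraMap]; exact continuous_const
  | add x y hx hy ihx ihy => simp only [evalP_add]; exact ihx.add ihy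
  | mul x y hx hy ihx ihy => simp only [evalP_mul]; exact ihx.mul ihy

include hfA hfZ hfC hgA in
lemma StmtNine.derivA_evalP {i j : ℕ} (hi : i + 1 ≤ d) (hj : i + 1 + j ≤ r)
    {P : MvPolynomial σA ℤ} (hP : P ∈ Good i j) (a z : ℝ) :
    HasDerivAt (fun a' => evalP Df Dg P a' z) (evalP Df Dg (dA P) a z) a := by
  induction hP using Algebra.adjoin_induction generalizing a with
  | mem x hx =>
    obtain ⟨⟨b, p, q⟩, ⟨h1, h2⟩, rfl⟩ := hx
    simp only [ok, Set.mem_setOf_eq] at h1 h2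
    rw [dA_X]
    cases b with
    | true =>
      simp only [evalP_X_true, vA, evalP_add, evalP_mul, evalP_X_false]
      exact hasDerivAt_comp₂ (Df p q) (Df (p+1) q) (Df p (q+1)) (fun a' => Dg 0 0 a' z)
        (Dg 1 0 a z) a
        (hfA p q ⟨by omega, by omega⟩)
        (hfZ p q ⟨by omega, by omega⟩)
        (hfC (p+1) q ⟨by omega, by omega⟩)
        (hgA 0 0 ⟨by omega, by omega⟩ a z)
    | false =>
      simp only [evalP_X_false, vA]
      exact hgA p q ⟨by omega, by omega⟩ a z
  | algebraMap n =>
    rw [Derivation.map_algebraMap]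
    simp only [evalP_algebraMap, evalP_zero]
    exact hasDerivAt_const a _
  | add x y hx hy ihx ihy =>
    simp only [evalP_add, map_add]
    exact (ihx a).add (ihy a)
  | mul x y hx hy ihx ihy =>
    rw [leib]
    simp only [evalP_add, evalP_mul]
    have : HasDerivAt (fun a' => evalP Df Dg x a' z * evalP Df Dg y a' z) _ a := (ihx a).mul (ihy a)
    convert this using 1
    ring

include hfZ hgZ in
lemma StmtNine.derivZ_evalP {i j : ℕ} (hi : i ≤ d) (hj : i + (j + 1) ≤ r)
    {P : MvPolynomial σA ℤ} (hP : P ∈ Good i j) (a z : ℝ) :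
    HasDerivAt (fun z' => evalP Df Dg P a z') (evalP Df Dg (dZ P) a z) z := by
  induction hP using Algebra.adjoin_induction generalizing z with
  | mem x hx =>
    obtain ⟨⟨b, p, q⟩, ⟨h1, h2⟩, rfl⟩ := hx
    simp only [ok, Set.mem_setOf_eq] at h1 h2
    rw [dZ_X]
    cases b with
    | true =>
      simp only [evalP_X_true, vZ, evalP_mul, evalP_X_false]
      have hgd := hgZ 0 0 ⟨by omega, by omega⟩ a z
      have hfd := hfZ p q ⟨by omega, by omega⟩ a (Dg 0 0 a z)
      exact hfd.comp z hgd
    | false =>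
      simp only [evalP_X_false, vZ]
      exact hgZ p q ⟨by omega, by omega⟩ a z
  | algebraMap n =>
    rw [Derivation.map_algebraMap]
    simp only [evalP_algebraMap, evalP_zero]
    exact hasDerivAt_const z _
  | add x y hx hy ihx ihy =>
    simp only [evalP_add, map_add]
    exact (ihx z).add (ihy z)
  | mul x y hx hy ihx ihy =>
    rw [leib]
    simp only [evalP_add, evalP_mul]
    have : HasDerivAt (fun z' => evalP Df Dg x a z' * evalP Df Dg y a z') _ z := (ihx z).mul (ihy z)
    convert this using 1
    ring

end Eval

noncomputable def StmtNine.E (i j : ℕ) : MvPolynomial σA ℤ :=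
  (⇑dA)^[i] ((⇑dZ)^[j] (X (true, 0, 0)))

lemma StmtNine.E_succ_a (i j : ℕ) : E (i + 1) j = dA (E i j) := by
  simp [E, Function.iterate_succ_apply']

lemma StmtNine.commute_dAdZ : Function.Commute ⇑dA ⇑dZ := fun P => comm P

lemma StmtNine.E_succ_z (i j : ℕ) : E i (j + 1) = dZ (E i j) := by
  simp only [E, Function.iterate_succ_apply']
  exact commute_dAdZ.iterate_left i (((⇑dZ))^[j] (X (true, 0, 0)))

lemma StmtNine.E_good (i j : ℕ) : E i j ∈ Good i j := by
  induction i with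
  | zero =>
    induction j with
    | zero => exact X_mem_good' true 0 0 (by omega) (by omega)
    | succ j ih => rw [E_succ_z]; exact dZ_good ih
  | succ i ih => rw [E_succ_a]; exact dA_good ih





/-- Membership of a family `f : a ↦ f_a` (here `f : ℝ → ℝ → ℝ`, parameter first, phase
variable second, with `M = ℝ` and `k = 1`) in the regularity class determined by a set
`S` of bi-indices `(i,j)`: there is a coherent system `D i j` of mixed partial derivatives
`∂_a^i ∂_z^j f_a(z)`, existing for all `(i,j) ∈ S` and jointly continuous there. -/
def MemClass (S : ℕ → ℕ → Prop) (f : ℝ → ℝ → ℝ) : Prop :=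
  ∃ D : ℕ → ℕ → ℝ → ℝ → ℝ,
    D 0 0 = f ∧
    (∀ i j, S (i + 1) j → ∀ a z,
      HasDerivAt (fun a' => D i j a' z) (D (i + 1) j a z) a) ∧
    (∀ i j, S i (j + 1) → ∀ a z,
      HasDerivAt (fun z' => D i j a z') (D i (j + 1) a z) z) ∧
    (∀ i j, S i j → Continuous fun p : ℝ × ℝ => D i j p.1 p.2)

/-- The Arnold class `C^{d,r}_A`: mixed partials `∂_a^i∂_z^j` exist continuously for
`i ≤ d` and `i + j ≤ r`. -/
def ClassA (d r : ℕ) (f : ℝ → ℝ → ℝ) : Prop :=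
  MemClass (fun i j => i ≤ d ∧ i + j ≤ r) f

/-- The Arnold class is closed under composition of families: if `(f_a)_a` and `(g_a)_a`
belong to `C^{d,r}_A`, then so does the composed family `(f_a ∘ g_a)_a`. -/
theorem stmt9 (d r : ℕ) (hdr : d ≤ r) (f g : ℝ → ℝ → ℝ)
    (hf : ClassA d r f) (hg : ClassA d r g) :
    ClassA d r (fun a z => f a (g a z)) := by
  obtain ⟨Df, hf0, hfA, hfZ, hfC⟩ := hf
  obtain ⟨Dg, hg0, hgA, hgZ, hgC⟩ := hg
  open StmtNine in
  refine ⟨fun i j => evalP Df Dg (E i j), ?_, ?_, ?_, ?_⟩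
  · funext a z
    show evalP Df Dg (E 0 0) a z = f a (g a z)
    rw [show E 0 0 = X (true, 0, 0) from rfl, evalP_X_true, hf0, hg0]
  · intro i j ⟨h1, h2⟩ a z
    show HasDerivAt (fun a' => evalP Df Dg (E i j) a' z) (evalP Df Dg (E (i + 1) j) a z) a
    rw [E_succ_a]
    exact derivA_evalP Df Dg hfC hfA hgA hfZ h1 h2 (E_good i j) a z
  · intro i j ⟨h1, h2⟩ a z
    show HasDerivAt (fun z' => evalP Df Dg (E i j) a z') (evalP Df Dg (E i (j + 1)) a z) z
    rw [E_succ_z]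
    exact derivZ_evalP Df Dg hfZ hgZ h1 h2 (E_good i j) a z
  · intro i j ⟨h1, h2⟩
    exact cont_evalP Df Dg hfC hgC h1 h2 (E_good i j)
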